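/- Let d ≥ 3. There is a constant C(d) > 0 such that for every finite V ⊂ Z^d containing 0, |R_{V∖{0}}| / |R_V| ≤ C(d); equivalently, det(Δ_{V∖{0}}) / det(Δ_V) ≤ C(d) uniformly in V. -/

import Mathlib

/- The Abelian sandpile model on ℤ^d.  Sites are `Fin d → ℤ`; the toppling matrix is
`Δ_{xx} = 2d`, `Δ_{xy} = -1` for nearest neighbours, `0` otherwise.  Toppling in volume `V`
uses the matrix restricted to `V` (grains leaving `V` disappear).  `LegalSeq V η l η'`
says that `l` is a sequence of legal topplings in `V` taking `η` to `η'`. -/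

open scoped Classical

abbrev Site (d : ℕ) := Fin d → ℤ

def adjacent {d : ℕ} (x y : Site d) : Prop := (∑ i, |x i - y i|) = 1

noncomputable def lap (d : ℕ) (x y : Site d) : ℤ :=
  if x = y then 2 * d else if adjacent x y then -1 else 0

abbrev Config (d : ℕ) := Site d → ℤ

noncomputable def lapV {d : ℕ} (V : Finset (Site d)) (x y : Site d) : ℤ :=
  if x ∈ V ∧ y ∈ V then lap d x y else 0

noncomputable def topple {d : ℕ} (V : Finset (Site d)) (x : Site d) (η : Config d) :
    Config d := fun y => η y - lapV V x y

def Stable {d : ℕ} (V : Finset (Site d)) (η : Config d) : Prop := ∀ x ∈ V, η x ≤ 2 * d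

/-- `l` is a sequence of legal topplings in volume `V` carrying `η` to `η'`. -/
def LegalSeq {d : ℕ} (V : Finset (Site d)) : Config d → List (Site d) → Config d → Prop
  | η, [], η' => η' = η
  | η, x :: l, η' => x ∈ V ∧ (2 * d : ℤ) < η x ∧ LegalSeq V (topple V x η) l η'

noncomputable def addGrain {d : ℕ} (x : Site d) (η : Config d) : Config d :=
  fun y => if y = x then η y + 1 else η y


/-- The toppling matrix restricted to `V`, over `ℝ`. -/
noncomputable def lapMatR {d : ℕ} (V : Finset (Site d)) :
    Matrix {x // x ∈ V} {x // x ∈ V} ℝ := fun a b => ((lap d a.1 b.1 : ℤ) : ℝ)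


namespace ASM
variable {d : ℕ}

def E (i : Fin d) : Site d := fun j => if j = i then 1 else 0

lemma add_E_sub_E (p : Site d) (i : Fin d) : p + E i - E i = p := add_sub_cancel_right p (E i)
lemma sub_E_add_E (p : Site d) (i : Fin d) : p - E i + E i = p := sub_add_cancel p (E i)

lemma adjacent_iff {x y : Site d} : adjacent x y ↔ ∃ i, y = x + E i ∨ y = x - E i := by
  constructor
  · intro h
    unfold adjacent at h
    have hex : ∃ i, x i ≠ y i := by
      by_contra hc
      push_neg at hc
      simp [hc] at h
    obtain ⟨i, hi⟩ := hex
    have h1 : |x i - y i| ≤ 1 := h ▸ Finset.single_le_sum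
      (f := fun j => |x j - y j|) (fun j _ => abs_nonneg _) (Finset.mem_univ i)
    have h2 : 0 < |x i - y i| := abs_pos.mpr (sub_ne_zero.mpr hi)
    have hsplit := Finset.add_sum_erase Finset.univ (fun j => |x j - y j|) (Finset.mem_univ i)
    have hrest : ∑ j ∈ Finset.univ.erase i, |x j - y j| = 0 := by
      omega
    have hothers : ∀ j, j ≠ i → x j = y j := by
      intro j hj
      have h0 := (Finset.sum_eq_zero_iff_of_nonneg (fun k _ => abs_nonneg _)).mp hrest j
        (Finset.mem_erase.mpr ⟨hj, Finset.mem_univ j⟩)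
      have := abs_eq_zero.mp h0
      omega
    refine ⟨i, ?_⟩
    obtain ⟨hl, hr⟩ := abs_le.mp h1
    have hii : x i - y i = 1 ∨ x i - y i = -1 := by
      rcases lt_trichotomy (x i) (y i) with hc | hc | hc <;> omega
    rcases hii with hii | hii
    · right; funext j
      show y j = x j - (if j = i then 1 else 0)
      by_cases hj : j = i
      · subst hj; simp; omega
      · simp [hj, hothers j hj]
    · left; funext j
      show y j = x j + (if j = i then 1 else 0)
      by_cases hj : j = i
      · subst hj; simp; omega
      · simp [hj, hothers j hj]
  · rintro ⟨i, rfl | rfl⟩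
    · unfold adjacent
      have hc : ∀ j, |x j - (x + E i) j| = if j = i then (1:ℤ) else 0 := by
        intro j; by_cases hj : j = i <;> simp [E, hj]
      rw [Finset.sum_congr rfl (fun j _ => hc j),
        Finset.sum_ite_eq' Finset.univ i (fun _ => (1:ℤ))]
      simp
    · unfold adjacent
      have hc : ∀ j, |x j - (x - E i) j| = if j = i then (1:ℤ) else 0 := by
        intro j; by_cases hj : j = i <;> simp [E, hj]
      rw [Finset.sum_congr rfl (fun j _ => hc j),
        Finset.sum_ite_eq' Finset.univ i (fun _ => (1:ℤ))]
      simp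

lemma adjacent_symm {x y : Site d} (h : adjacent x y) : adjacent y x := by
  unfold adjacent at *
  rw [← h]
  exact Finset.sum_congr rfl (fun i _ => abs_sub_comm _ _)

lemma adjacent_irrefl (x : Site d) : ¬ adjacent x x := by simp [adjacent]

lemma lap_self (x : Site d) : lap d x x = 2 * d := if_pos rfl

lemma lap_of_adjacent {x y : Site d} (h : adjacent x y) : lap d x y = -1 := by
  have hne : x ≠ y := by rintro rfl; exact adjacent_irrefl _ h
  unfold lap; rw [if_neg hne, if_pos h]

lemma lap_of_not {x y : Site d} (h1 : x ≠ y) (h2 : ¬ adjacent x y) : lap d x y = 0 := by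
  unfold lap; rw [if_neg h1, if_neg h2]

lemma lap_comm (x y : Site d) : lap d x y = lap d y x := by
  rcases eq_or_ne x y with rfl | hne
  · rfl
  · by_cases h : adjacent x y
    · rw [lap_of_adjacent h, lap_of_adjacent (adjacent_symm h)]
    · rw [lap_of_not hne h, lap_of_not hne.symm (fun hc => h (adjacent_symm hc))]

/-- translation invariance of sums over a sufficiently large finset -/
lemma sum_translate (f : Site d → ℝ) (S : Finset (Site d)) (t : Site d)
    (h : ∀ q, f q ≠ 0 → q ∈ S ∧ q - t ∈ S) :
    ∑ p ∈ S, f (p + t) = ∑ p ∈ S, f p := by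
  have hinj : Function.Injective (fun p : Site d => p + t) := fun a b hab => by
    have := congrArg (fun z => z - t) hab; simpa using this
  have h1 : ∑ p ∈ S, f (p + t) = ∑ q ∈ S.image (· + t), f q := by
    rw [Finset.sum_image (fun a _ b _ hab => hinj hab)]
  rw [h1]
  have h2 : ∑ q ∈ S.image (· + t), f q = ∑ q ∈ S ∪ S.image (· + t), f q := by
    apply Finset.sum_subset (Finset.subset_union_right)
    intro q _ hq
    by_contra hfq
    exact hq (Finset.mem_image.mpr ⟨q - t, (h q hfq).2, sub_add_cancel q t⟩)
  have h3 : ∑ q ∈ S, f q = ∑ q ∈ S ∪ S.image (· + t), f q := by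
    apply Finset.sum_subset (Finset.subset_union_left)
    intro q _ hq
    by_contra hfq
    exact hq ((h q hfq).1)
  rw [h2, h3]

end ASM


namespace ASM2
open ASM
variable {d : ℕ}

noncomputable def ext (V : Finset (Site d)) (v : {x // x ∈ V} → ℝ) : Site d → ℝ :=
  fun p => if h : p ∈ V then v ⟨p, h⟩ else 0

lemma ext_not_mem {V : Finset (Site d)} {v : {x // x ∈ V} → ℝ} {p : Site d} (h : p ∉ V) :
    ext V v p = 0 := dif_neg h

lemma ext_support {V : Finset (Site d)} {v : {x // x ∈ V} → ℝ} {p : Site d}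
    (h : ext V v p ≠ 0) : p ∈ V := by
  by_contra hc; exact h (dif_neg hc)

lemma ext_val {V : Finset (Site d)} {v : {x // x ∈ V} → ℝ} (a : {x // x ∈ V}) :
    ext V v a.1 = v a := by
  rw [ext, dif_pos a.2]

/-- the 2d neighbours of `p`, as a map from `Fin d × Bool` -/
def nbr (p : Site d) (s : Fin d × Bool) : Site d := if s.2 then p + E s.1 else p - E s.1

lemma nbr_apply (p : Site d) (i : Fin d) (b : Bool) (k : Fin d) :
    nbr p (i, b) k = p k + (if k = i then (if b then 1 else -1) else 0) := by
  cases b <;> by_cases hk : k = i <;> simp [nbr, E, hk] <;> ring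

lemma nbr_inj (p : Site d) : Function.Injective (nbr p) := by
  rintro ⟨i, b⟩ ⟨j, c⟩ h
  have hi := congrFun h i
  rw [nbr_apply, nbr_apply, if_pos rfl] at hi
  by_cases hij : i = j
  · subst hij
    rw [if_pos rfl] at hi
    cases b <;> cases c <;> first | rfl | (exfalso; norm_num at hi)
  · exfalso
    rw [if_neg hij] at hi
    cases b <;> norm_num at hi

lemma self_ne_nbr (p : Site d) (s : Fin d × Bool) : p ≠ nbr p s := by
  obtain ⟨i, b⟩ := s
  intro hc
  have hi := congrFun hc i
  rw [nbr_apply, if_pos rfl] at hi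
  cases b <;> norm_num at hi

lemma adjacent_iff_nbr {p q : Site d} : adjacent p q ↔ ∃ s, q = nbr p s := by
  rw [adjacent_iff]
  constructor
  · rintro ⟨i, h | h⟩
    exacts [⟨(i, true), h⟩, ⟨(i, false), h⟩]
  · rintro ⟨⟨i, b⟩, h⟩
    cases b
    exacts [⟨i, Or.inr h⟩, ⟨i, Or.inl h⟩]

lemma row_sum (V : Finset (Site d)) (v : {x // x ∈ V} → ℝ) (p : Site d) :
    ∑ q ∈ V, ((lap d p q : ℤ) : ℝ) * ext V v q
      = 2 * d * ext V v p - ∑ i, (ext V v (p + E i) + ext V v (p - E i)) := by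
  set X := ext V v with hX
  set N : Finset (Site d) :=
    insert p ((Finset.univ : Finset (Fin d × Bool)).image (nbr p)) with hN
  have hpim : p ∉ (Finset.univ : Finset (Fin d × Bool)).image (nbr p) := by
    intro hc
    obtain ⟨s, _, hs⟩ := Finset.mem_image.mp hc
    exact self_ne_nbr p s hs.symm
  have h1 : ∑ q ∈ V, ((lap d p q : ℤ) : ℝ) * X q
      = ∑ q ∈ V ∪ N, ((lap d p q : ℤ) : ℝ) * X q := by
    apply Finset.sum_subset Finset.subset_union_left
    intro q _ hq
    rw [hX, ext_not_mem hq, mul_zero]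
  have h2 : ∑ q ∈ V ∪ N, ((lap d p q : ℤ) : ℝ) * X q
      = ∑ q ∈ N, ((lap d p q : ℤ) : ℝ) * X q := by
    symm
    apply Finset.sum_subset Finset.subset_union_right
    intro q _ hq
    have hqp : p ≠ q := by
      rintro rfl; exact hq (Finset.mem_insert_self _ _)
    have hadj : ¬ adjacent p q := by
      intro hc
      obtain ⟨s, hs⟩ := adjacent_iff_nbr.mp hc
      exact hq (Finset.mem_insert_of_mem (Finset.mem_image.mpr ⟨s, Finset.mem_univ s, hs.symm⟩))
    rw [lap_of_not hqp hadj]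
    norm_num
  have h3 : ∑ q ∈ N, ((lap d p q : ℤ) : ℝ) * X q
      = 2 * d * X p + ∑ s : Fin d × Bool, ((lap d p (nbr p s) : ℤ) : ℝ) * X (nbr p s) := by
    rw [hN, Finset.sum_insert hpim, lap_self,
      Finset.sum_image (fun a _ b _ hab => nbr_inj p hab)]
    push_cast
    ring
  have h4 : ∑ s : Fin d × Bool, ((lap d p (nbr p s) : ℤ) : ℝ) * X (nbr p s)
      = - ∑ i, (X (p + E i) + X (p - E i)) := by
    have hval : ∀ s : Fin d × Bool, ((lap d p (nbr p s) : ℤ) : ℝ) = -1 := by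
      intro s
      rw [lap_of_adjacent (adjacent_iff_nbr.mpr ⟨s, rfl⟩)]
      norm_num
    rw [Finset.sum_congr rfl (fun s _ => by rw [hval s, neg_one_mul]),
      ← Finset.sum_neg_distrib, Fintype.sum_prod_type]
    apply Finset.sum_congr rfl
    intro i _
    rw [Fintype.sum_bool]
    have h1 : nbr p (i, true) = p + E i := rfl
    have h2 : nbr p (i, false) = p - E i := rfl
    rw [h1, h2]
    ring
  rw [h1, h2, h3, h4]
  ring


open Matrix in
lemma quadform_eq (V W : Finset (Site d)) (v : {x // x ∈ V} → ℝ)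
    (hVW : V ⊆ W) (hW : ∀ (i : Fin d) (q : Site d), q + E i ∈ V → q ∈ W) :
    v ⬝ᵥ (lapMatR V) *ᵥ v = ∑ p ∈ W, ∑ i, (ext V v p - ext V v (p + E i))^2 := by
  set X := ext V v with hX
  have step1 : v ⬝ᵥ (lapMatR V) *ᵥ v
      = ∑ p ∈ V, X p * ∑ q ∈ V, ((lap d p q : ℤ) : ℝ) * X q := by
    simp only [dotProduct, Matrix.mulVec, lapMatR]
    rw [← Finset.sum_coe_sort V (fun p => X p * ∑ q ∈ V, ((lap d p q : ℤ) : ℝ) * X q)]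
    apply Finset.sum_congr rfl
    intro a _
    rw [hX, ext_val a, ← Finset.sum_coe_sort V (fun q => ((lap d a.1 q : ℤ) : ℝ) * X q)]
    congr 1
    apply Finset.sum_congr rfl
    intro b _
    rw [hX, ext_val b]
  have step2 : ∀ p : Site d, X p * ∑ q ∈ V, ((lap d p q : ℤ) : ℝ) * X q
      = ∑ i, (X p * (X p - X (p + E i)) + X p * (X p - X (p - E i))) := by
    intro p
    rw [hX, row_sum V v p, ← hX]
    have hc : ∑ i : Fin d, (X p * (X p - X (p + E i)) + X p * (X p - X (p - E i)))
        = ∑ i : Fin d, (2 * (X p * X p) - X p * (X (p + E i) + X (p - E i))) := by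
      apply Finset.sum_congr rfl; intros; ring
    rw [hc, Finset.sum_sub_distrib, Finset.sum_const, Finset.card_univ, Fintype.card_fin,
      ← Finset.mul_sum, nsmul_eq_mul]
    ring
  rw [step1, Finset.sum_congr rfl (fun p _ => step2 p)]
  have step3 : ∑ p ∈ V, (∑ i, (X p * (X p - X (p + E i)) + X p * (X p - X (p - E i))))
      = ∑ p ∈ W, (∑ i, (X p * (X p - X (p + E i)) + X p * (X p - X (p - E i)))) := by
    apply Finset.sum_subset hVW
    intro p _ hp
    have h0 : X p = 0 := by rw [hX]; exact ext_not_mem hp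
    simp [h0]
  rw [step3, Finset.sum_comm]
  have step4 : ∀ i : Fin d, ∑ p ∈ W, X p * (X p - X (p - E i))
      = ∑ p ∈ W, X (p + E i) * (X (p + E i) - X p) := by
    intro i
    have hcond : ∀ q : Site d, (fun q => X (q + E i) * (X (q + E i) - X q)) q ≠ 0 →
        q ∈ W ∧ q - (-(E i)) ∈ W := by
      intro q hq
      have h1 : X (q + E i) ≠ 0 := left_ne_zero_of_mul hq
      have h2 : q + E i ∈ V := by
        apply ext_support (v := v)
        rw [← hX]; exact h1
      refine ⟨hW i q h2, ?_⟩
      rw [sub_neg_eq_add]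
      exact hVW h2
    have := sum_translate (fun q => X (q + E i) * (X (q + E i) - X q)) W (-(E i)) hcond
    rw [← this]
    apply Finset.sum_congr rfl
    intro p _
    rw [← sub_eq_add_neg, sub_E_add_E]
  calc ∑ i : Fin d, ∑ p ∈ W, (X p * (X p - X (p + E i)) + X p * (X p - X (p - E i)))
      = ∑ i : Fin d, (∑ p ∈ W, X p * (X p - X (p + E i))
          + ∑ p ∈ W, X p * (X p - X (p - E i))) := by
        apply Finset.sum_congr rfl; intros; rw [Finset.sum_add_distrib]
    _ = ∑ i : Fin d, (∑ p ∈ W, X p * (X p - X (p + E i))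
          + ∑ p ∈ W, X (p + E i) * (X (p + E i) - X p)) := by
        apply Finset.sum_congr rfl; intro i _; rw [step4 i]
    _ = ∑ i : Fin d, ∑ p ∈ W, (X p - X (p + E i))^2 := by
        apply Finset.sum_congr rfl; intro i _
        rw [← Finset.sum_add_distrib]
        apply Finset.sum_congr rfl; intros; ring
    _ = ∑ p ∈ W, ∑ i, (X p - X (p + E i))^2 := Finset.sum_comm

open Matrix in
lemma lapMatR_posDef (hd1 : 1 ≤ d) (V : Finset (Site d)) : (lapMatR V).PosDef := by
  rw [Matrix.posDef_iff_dotProduct_mulVec]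
  constructor
  · show (lapMatR V)ᴴ = lapMatR V
    ext a b
    simp only [Matrix.conjTranspose_apply, lapMatR, star_trivial]
    rw [lap_comm]
  · intro x hx
    have hstar : star x = x := by
      funext j; simp
    rw [hstar]
    set W := V ∪ Finset.univ.biUnion (fun i : Fin d => V.image (fun p => p - E i)) with hWdef
    have hVW : V ⊆ W := Finset.subset_union_left
    have hWc : ∀ (i : Fin d) (q : Site d), q + E i ∈ V → q ∈ W := by
      intro i q hq
      exact Finset.mem_union_right _ (Finset.mem_biUnion.mpr
        ⟨i, Finset.mem_univ i, Finset.mem_image.mpr ⟨q + E i, hq, add_E_sub_E q i⟩⟩)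
    rw [quadform_eq V W x hVW hWc]
    set X := ext V x with hX
    have hnn : ∀ p ∈ W, (0:ℝ) ≤ ∑ i, (X p - X (p + E i))^2 :=
      fun p _ => Finset.sum_nonneg (fun i _ => sq_nonneg _)
    rcases (Finset.sum_nonneg hnn).lt_or_eq with hlt | heq
    · exact hlt
    exfalso
    have hzero : ∀ p ∈ W, ∀ i : Fin d, X p - X (p + E i) = 0 := by
      intro p hp i
      have h1 := (Finset.sum_eq_zero_iff_of_nonneg hnn).mp heq.symm p hp
      have h2 := (Finset.sum_eq_zero_iff_of_nonneg (fun i _ => sq_nonneg _)).mp h1 i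
        (Finset.mem_univ i)
      exact (pow_eq_zero_iff (n := 2) (by norm_num)).mp h2
    have hstep : ∀ p (i : Fin d), X (p + E i) = X p := by
      intro p i
      by_cases hp : p ∈ W
      · have := hzero p hp i; linarith
      · have hp0 : X p = 0 := by rw [hX]; exact ext_not_mem (fun hc => hp (hVW hc))
        have hp1 : X (p + E i) = 0 := by
          by_contra hc
          exact hp (hWc i p (ext_support (by rw [← hX]; exact hc)))
        rw [hp0, hp1]
    obtain ⟨a, ha⟩ : ∃ a, x a ≠ 0 := by
      by_contra hc; push_neg at hc; exact hx (funext hc)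
    have hXa : X a.1 ≠ 0 := by rw [hX, ext_val a]; exact ha
    set i0 : Fin d := ⟨0, hd1⟩ with hi0
    have hiter : ∀ n : ℕ, X (a.1 + n • E i0) ≠ 0 := by
      intro n
      induction n with
      | zero => simpa using hXa
      | succ n ih =>
        have hrw : a.1 + (n+1) • E i0 = (a.1 + n • E i0) + E i0 := by
          rw [succ_nsmul, ← add_assoc]
        rw [hrw, hstep]
        exact ih
    have hmem : ∀ n : ℕ, a.1 + n • E i0 ∈ V :=
      fun n => ext_support (by rw [← hX]; exact hiter n)
    have hinj : Function.Injective (fun n : ℕ => (⟨a.1 + n • E i0, hmem n⟩ : {x // x ∈ V})) := by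
      intro m n hmn
      have key : ∀ (p : Site d) (k : ℕ), (p + k • E i0) i0 = p i0 + k := by
        intro p k
        show p i0 + (k • E i0) i0 = _
        rw [Pi.smul_apply]
        simp [E]
      have h1 := congrArg (fun z : {x // x ∈ V} => z.1 i0) hmn
      simp only at h1
      rw [key, key] at h1
      omega
    obtain ⟨m, n, hmn, he⟩ := Finite.exists_ne_map_eq_of_infinite
      (fun n : ℕ => (⟨a.1 + n • E i0, hmem n⟩ : {x // x ∈ V}))
    exact hmn (hinj he)

lemma lapMatR_det_pos (hd1 : 1 ≤ d) (V : Finset (Site d)) : 0 < (lapMatR V).det :=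
  (lapMatR_posDef hd1 V).det_pos


/-! ### The octant flow in the first three coordinates -/

def lvl (p : Site d) : ℤ := ∑ i, p i

def inOct (p : Site d) : Prop := (∀ i, 0 ≤ p i) ∧ (∀ i : Fin d, 3 ≤ (i : ℕ) → p i = 0)

noncomputable def cc (n : ℤ) : ℝ := ((n:ℝ)+1) * ((n:ℝ)+2) * ((n:ℝ)+3) / 2

lemma cc_pos {n : ℤ} (hn : 0 ≤ n) : 0 < cc n := by
  have h : (0:ℝ) ≤ (n:ℝ) := by exact_mod_cast hn
  unfold cc
  have h1 : (0:ℝ) < (n:ℝ)+1 := by linarith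
  have h2 : (0:ℝ) < (n:ℝ)+2 := by linarith
  have h3 : (0:ℝ) < (n:ℝ)+3 := by linarith
  exact div_pos (mul_pos (mul_pos h1 h2) h3) (by norm_num)

noncomputable def flow (M : ℤ) (p : Site d) (i : Fin d) : ℝ :=
  if inOct p ∧ (i:ℕ) < 3 ∧ lvl p < M then ((p i : ℝ) + 1) / cc (lvl p) else 0

lemma lvl_nonneg {p : Site d} (h : inOct p) : 0 ≤ lvl p :=
  Finset.sum_nonneg (fun i _ => h.1 i)

lemma coord_le_lvl {p : Site d} (h : inOct p) (i : Fin d) : p i ≤ lvl p :=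
  Finset.single_le_sum (fun j _ => h.1 j) (Finset.mem_univ i)

lemma lvl_add (p : Site d) (i : Fin d) : lvl (p + E i) = lvl p + 1 := by
  unfold lvl
  rw [show ∑ j, (p + E i) j = ∑ j, (p j + E i j) from rfl, Finset.sum_add_distrib]
  congr 1
  rw [show ∑ j, E i j = ∑ j, if j = i then (1:ℤ) else 0 from rfl,
    Finset.sum_ite_eq' Finset.univ i (fun _ => (1:ℤ))]
  simp

lemma lvl_sub (p : Site d) (i : Fin d) : lvl (p - E i) = lvl p - 1 := by
  have := lvl_add (p - E i) i
  rw [sub_E_add_E] at this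
  omega

lemma inOct_zero : inOct (0 : Site d) := ⟨fun _ => le_refl 0, fun _ _ => rfl⟩

lemma lvl_zero : lvl (0 : Site d) = 0 := Finset.sum_const_zero

lemma add_E_apply (p : Site d) (i j : Fin d) : (p + E i) j = p j + if j = i then 1 else 0 := rfl
lemma sub_E_apply (p : Site d) (i j : Fin d) : (p - E i) j = p j - if j = i then 1 else 0 := rfl

lemma inOct_add {p : Site d} {i : Fin d} (h : inOct p) (hi : (i:ℕ) < 3) :
    inOct (p + E i) := by
  constructor
  · intro j
    rw [add_E_apply]
    have := h.1 j
    split <;> omega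
  · intro j hj
    rw [add_E_apply, if_neg (by rintro rfl; omega), h.2 j hj, add_zero]

lemma inOct_of_sub {q : Site d} {i : Fin d} (h : inOct (q - E i)) (hi : (i:ℕ) < 3) :
    inOct q := by
  rw [← sub_E_add_E q i]
  exact inOct_add h hi

lemma inOct_sub {q : Site d} {i : Fin d} (h : inOct q) (hi : (i:ℕ) < 3) (hq : 1 ≤ q i) :
    inOct (q - E i) := by
  constructor
  · intro j
    rw [sub_E_apply]
    have := h.1 j
    split
    · next hji => subst hji; omega
    · omega
  · intro j hj
    rw [sub_E_apply, if_neg (by rintro rfl; omega), h.2 j hj, sub_zero]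

lemma not_inOct_zero_sub (i : Fin d) : ¬ inOct ((0 : Site d) - E i) := by
  intro h
  have := h.1 i
  rw [sub_E_apply, if_pos rfl] at this
  simp at this

lemma eq_zero_of_lvl_zero {p : Site d} (h : inOct p) (h0 : lvl p = 0) : p = 0 := by
  funext i
  exact (Finset.sum_eq_zero_iff_of_nonneg (fun j _ => h.1 j)).mp h0 i (Finset.mem_univ i)

/-- the first three indices -/
def tf (d : ℕ) : Finset (Fin d) := Finset.univ.filter (fun i => (i:ℕ) < 3)

lemma sum_restrict {β : Type*} [AddCommMonoid β] (f : Fin d → β)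
    (hf : ∀ i : Fin d, ¬ ((i:ℕ) < 3) → f i = 0) :
    ∑ i, f i = ∑ i ∈ tf d, f i :=
  (Finset.sum_filter_of_ne (fun i _ h => by by_contra hc; exact h (hf i hc))).symm

lemma tf_eq (hd : 3 ≤ d) :
    tf d = {(⟨0, by omega⟩ : Fin d), ⟨1, by omega⟩, ⟨2, by omega⟩} := by
  ext i
  simp only [tf, Finset.mem_filter, Finset.mem_univ, true_and, Finset.mem_insert,
    Finset.mem_singleton, Fin.ext_iff]
  omega

lemma sum_tf {β : Type*} [AddCommMonoid β] (hd : 3 ≤ d) (g : Fin d → β) :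
    ∑ i ∈ tf d, g i = g ⟨0, by omega⟩ + g ⟨1, by omega⟩ + g ⟨2, by omega⟩ := by
  rw [tf_eq hd, Finset.sum_insert (by simp [Fin.ext_iff]),
    Finset.sum_insert (by simp [Fin.ext_iff]), Finset.sum_singleton, add_assoc]

lemma sum3_lvl (hd : 3 ≤ d) {p : Site d} (h : inOct p) :
    p ⟨0, by omega⟩ + p ⟨1, by omega⟩ + p ⟨2, by omega⟩ = lvl p := by
  rw [show lvl p = ∑ i, p i from rfl, sum_restrict p (fun i hi => h.2 i (by omega)),
    sum_tf hd]

noncomputable def Oct (d : ℕ) (M : ℤ) : Finset (Site d) :=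
  (Fintype.piFinset (fun _ : Fin d => Finset.Icc (0:ℤ) M)).filter
    (fun p => inOct p ∧ lvl p ≤ M)

lemma mem_Oct {M : ℤ} {p : Site d} : p ∈ Oct d M ↔ inOct p ∧ lvl p ≤ M := by
  unfold Oct
  rw [Finset.mem_filter]
  constructor
  · exact fun h => h.2
  · intro h
    refine ⟨?_, h⟩
    rw [Fintype.mem_piFinset]
    intro i
    rw [Finset.mem_Icc]
    exact ⟨h.1.1 i, le_trans (coord_le_lvl h.1 i) h.2⟩

lemma flow_sum (hd : 3 ≤ d) (M : ℤ) (hM : 1 ≤ M) (X : Site d → ℝ)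
    (hX0 : ∀ p : Site d, inOct p → M ≤ lvl p → X p = 0) :
    ∑ p ∈ Oct d (M+1), ∑ i, flow M p i * (X p - X (p + E i)) = X 0 := by
  set S := Oct d (M+1) with hS
  have hsplit : ∀ p : Site d, ∑ i, flow M p i * (X p - X (p + E i))
      = (∑ i, flow M p i) * X p - ∑ i, flow M p i * X (p + E i) := by
    intro p
    rw [Finset.sum_mul, ← Finset.sum_sub_distrib]
    apply Finset.sum_congr rfl
    intros
    ring
  have htr : ∑ p ∈ S, ∑ i, flow M p i * X (p + E i)
      = ∑ q ∈ S, ∑ i, flow M (q - E i) i * X q := by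
    rw [Finset.sum_comm]
    conv_rhs => rw [Finset.sum_comm]
    apply Finset.sum_congr rfl
    intro i _
    have hcond : ∀ q : Site d, (fun q => flow M (q - E i) i * X q) q ≠ 0 →
        q ∈ S ∧ q - E i ∈ S := by
      intro q hq
      have h1 : flow M (q - E i) i ≠ 0 := left_ne_zero_of_mul hq
      have h2 : inOct (q - E i) ∧ (i:ℕ) < 3 ∧ lvl (q - E i) < M := by
        by_contra hc
        exact h1 (if_neg hc)
      obtain ⟨ho, hi3, hlv⟩ := h2
      rw [lvl_sub] at hlv
      constructor
      · rw [hS, mem_Oct]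
        exact ⟨inOct_of_sub ho hi3, by omega⟩
      · rw [hS, mem_Oct]
        exact ⟨ho, by rw [lvl_sub]; omega⟩
    have h3 := sum_translate (fun q => flow M (q - E i) i * X q) S (E i) hcond
    rw [← h3]
    apply Finset.sum_congr rfl
    intro p _
    rw [add_E_sub_E]
  have hdiv : ∀ q ∈ S, (∑ i, flow M q i) * X q - ∑ i, flow M (q - E i) i * X q
      = if q = 0 then X 0 else 0 := by
    intro q _
    have hfact : (∑ i, flow M q i) * X q - ∑ i, flow M (q - E i) i * X q
        = ((∑ i, flow M q i) - ∑ i, flow M (q - E i) i) * X q := by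
      simp [sub_mul, Finset.sum_mul]
    rw [hfact]
    by_cases hoq : inOct q
    · by_cases hq0 : q = 0
      · subst hq0
        rw [if_pos rfl]
        have hin : ∀ i : Fin d, flow M ((0:Site d) - E i) i = 0 := by
          intro i
          unfold flow
          rw [if_neg]
          rintro ⟨h1, _, _⟩
          exact not_inOct_zero_sub i h1
        have hout : ∑ i, flow M (0:Site d) i = 1 := by
          have h0 : ∀ i : Fin d, flow M (0:Site d) i = if (i:ℕ) < 3 then 1/3 else 0 := by
            intro i
            unfold flow
            by_cases hi : (i:ℕ) < 3
            · rw [if_pos ⟨inOct_zero, hi, by rw [lvl_zero]; omega⟩, if_pos hi, lvl_zero]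
              norm_num [cc]
            · rw [if_neg (by tauto), if_neg hi]
          rw [Finset.sum_congr rfl (fun i _ => h0 i), ← Finset.sum_filter]
          rw [show Finset.univ.filter (fun i : Fin d => (i:ℕ) < 3) = tf d from rfl, tf_eq hd]
          rw [Finset.sum_insert (by simp [Fin.ext_iff]),
            Finset.sum_insert (by simp [Fin.ext_iff]), Finset.sum_singleton]
          norm_num
        rw [Finset.sum_congr rfl (fun i _ => hin i), Finset.sum_const_zero, hout]
        ring
      · rw [if_neg hq0]
        have hn0 : 0 ≤ lvl q := lvl_nonneg hoq
        have hn1 : 1 ≤ lvl q := by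
          rcases hn0.lt_or_eq with h | h
          · omega
          · exact absurd (eq_zero_of_lvl_zero hoq h.symm) hq0
        by_cases hnM : lvl q < M
        · have hout : ∑ i, flow M q i = ((lvl q : ℝ) + 3) / cc (lvl q) := by
            have h0 : ∀ i : Fin d, flow M q i
                = if (i:ℕ) < 3 then ((q i : ℝ) + 1) / cc (lvl q) else 0 := by
              intro i
              unfold flow
              by_cases hi : (i:ℕ) < 3
              · rw [if_pos ⟨hoq, hi, hnM⟩, if_pos hi]
              · rw [if_neg (by tauto), if_neg hi]
            rw [Finset.sum_congr rfl (fun i _ => h0 i), ← Finset.sum_filter,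
              show Finset.univ.filter (fun i : Fin d => (i:ℕ) < 3) = tf d from rfl,
              sum_tf hd, ← add_div, ← add_div]
            congr 1
            have hs3 := sum3_lvl hd hoq
            push_cast [← hs3]
            ring
          have hin : ∑ i, flow M (q - E i) i = (lvl q : ℝ) / cc (lvl q - 1) := by
            have h0 : ∀ i : Fin d, flow M (q - E i) i
                = if (i:ℕ) < 3 then ((q i : ℝ)) / cc (lvl q - 1) else 0 := by
              intro i
              unfold flow
              by_cases hi : (i:ℕ) < 3
              · by_cases hq1 : 1 ≤ q i
                · rw [if_pos ⟨inOct_sub hoq hi hq1, hi, by rw [lvl_sub]; omega⟩, if_pos hi,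
                    lvl_sub]
                  congr 1
                  rw [sub_E_apply, if_pos rfl]
                  push_cast
                  ring
                · have hqz : q i = 0 := le_antisymm (by omega) (hoq.1 i)
                  rw [if_neg, if_pos hi, hqz]
                  · norm_num
                  · rintro ⟨h1, _, _⟩
                    have := h1.1 i
                    rw [sub_E_apply, if_pos rfl, hqz] at this
                    omega
              · rw [if_neg (by tauto), if_neg hi]
            rw [Finset.sum_congr rfl (fun i _ => h0 i), ← Finset.sum_filter,
              show Finset.univ.filter (fun i : Fin d => (i:ℕ) < 3) = tf d from rfl,
              sum_tf hd, ← add_div, ← add_div]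
            congr 1
            have hs3 := sum3_lvl hd hoq
            push_cast [← hs3]
            ring
          rw [hout, hin]
          have hcc0 : cc (lvl q) ≠ 0 := ne_of_gt (cc_pos hn0)
          have hcc1 : cc (lvl q - 1) ≠ 0 := ne_of_gt (cc_pos (by omega))
          have hzero : ((lvl q : ℝ) + 3) / cc (lvl q) - (lvl q : ℝ) / cc (lvl q - 1) = 0 := by
            rw [div_sub_div _ _ hcc0 hcc1, div_eq_zero_iff]
            left
            unfold cc
            push_cast
            ring
          rw [hzero, zero_mul]
        · rw [hX0 q hoq (by omega), mul_zero]
    · have hout : ∀ i : Fin d, flow M q i = 0 := by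
        intro i
        unfold flow
        rw [if_neg (by tauto)]
      have hin : ∀ i : Fin d, flow M (q - E i) i = 0 := by
        intro i
        unfold flow
        rw [if_neg]
        rintro ⟨h1, h2, _⟩
        exact hoq (inOct_of_sub h1 h2)
      have hq0 : q ≠ 0 := by
        rintro rfl
        exact hoq inOct_zero
      rw [if_neg hq0, Finset.sum_congr rfl (fun i _ => hout i),
        Finset.sum_congr rfl (fun i _ => hin i), Finset.sum_const_zero, sub_zero, zero_mul]
  calc ∑ p ∈ S, ∑ i, flow M p i * (X p - X (p + E i))
      = ∑ p ∈ S, ((∑ i, flow M p i) * X p - ∑ i, flow M p i * X (p + E i)) := by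
        apply Finset.sum_congr rfl; intro p _; exact hsplit p
    _ = ∑ p ∈ S, (∑ i, flow M p i) * X p - ∑ p ∈ S, ∑ i, flow M p i * X (p + E i) :=
        Finset.sum_sub_distrib _ _
    _ = ∑ q ∈ S, (∑ i, flow M q i) * X q - ∑ q ∈ S, ∑ i, flow M (q - E i) i * X q := by
        rw [htr]
    _ = ∑ q ∈ S, ((∑ i, flow M q i) * X q - ∑ i, flow M (q - E i) i * X q) :=
        (Finset.sum_sub_distrib _ _).symm
    _ = ∑ q ∈ S, (if q = 0 then X 0 else 0) := Finset.sum_congr rfl hdiv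
    _ = X 0 := by
        rw [Finset.sum_ite_eq' S (0 : Site d) (fun _ => X 0),
          if_pos (by rw [hS, mem_Oct]; exact ⟨inOct_zero, by rw [lvl_zero]; omega⟩)]

lemma flow_nonneg (M : ℤ) (p : Site d) (i : Fin d) : 0 ≤ flow M p i := by
  unfold flow
  split
  · next h =>
    have h0 : (0:ℤ) ≤ p i := h.1.1 i
    have h1 : (0:ℝ) ≤ (p i : ℝ) + 1 := by
      have : (0:ℝ) ≤ ((p i : ℤ) : ℝ) := by exact_mod_cast h0
      linarith
    exact div_nonneg h1 (le_of_lt (cc_pos (lvl_nonneg h.1)))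
  · exact le_refl 0

lemma flow_le (M : ℤ) {p : Site d} (hp : inOct p) (i : Fin d) :
    flow M p i ≤ if (i:ℕ) < 3 then ((p i : ℝ) + 1) / cc (lvl p) else 0 := by
  unfold flow
  by_cases hi : (i:ℕ) < 3
  · rw [if_pos hi]
    split
    · exact le_refl _
    · apply div_nonneg
      · have h0 : (0:ℤ) ≤ p i := hp.1 i
        have : (0:ℝ) ≤ ((p i : ℤ) : ℝ) := by exact_mod_cast h0
        linarith
      · exact le_of_lt (cc_pos (lvl_nonneg hp))
  · rw [if_neg (by tauto), if_neg hi]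

lemma flow_sq_sum_le (hd : 3 ≤ d) (M : ℤ) {p : Site d} (hp : inOct p) :
    ∑ i, (flow M p i)^2 ≤ 4 / (((lvl p : ℝ)+1)^2 * ((lvl p : ℝ)+2)^2) := by
  have hn : 0 ≤ lvl p := lvl_nonneg hp
  have hnr : (0:ℝ) ≤ ((lvl p : ℤ) : ℝ) := by exact_mod_cast hn
  have h1 : ((lvl p : ℝ)+1) ≠ 0 := by linarith
  have h2 : ((lvl p : ℝ)+2) ≠ 0 := by linarith
  have h3 : ((lvl p : ℝ)+3) ≠ 0 := by linarith
  have hsum : ∑ i, flow M p i ≤ ((lvl p : ℝ)+3) / cc (lvl p) := by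
    have hstep : ∑ i : Fin d, (fun i : Fin d =>
          if (i:ℕ) < 3 then ((p i : ℝ) + 1) / cc (lvl p) else 0) i
        = ((lvl p : ℝ)+3) / cc (lvl p) := by
      rw [sum_restrict _ (fun i hi => if_neg hi)]
      have hcong : (∑ i ∈ tf d, if (i:ℕ) < 3 then ((p i : ℝ) + 1) / cc (lvl p) else 0)
          = ∑ i ∈ tf d, ((p i : ℝ) + 1) / cc (lvl p) := by
        apply Finset.sum_congr rfl
        intro i hi
        exact if_pos (Finset.mem_filter.mp hi).2
      rw [hcong, sum_tf hd (fun i => ((p i : ℝ) + 1) / cc (lvl p)),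
        ← add_div, ← add_div]
      congr 1
      push_cast [← sum3_lvl hd hp]
      ring
    calc ∑ i, flow M p i
        ≤ ∑ i : Fin d, (fun i : Fin d =>
            if (i:ℕ) < 3 then ((p i : ℝ) + 1) / cc (lvl p) else 0) i :=
          Finset.sum_le_sum (fun i _ => flow_le M hp i)
      _ = ((lvl p : ℝ)+3) / cc (lvl p) := hstep
  have hsq : ∑ i, (flow M p i)^2 ≤ (∑ i, flow M p i)^2 :=
    Finset.sum_sq_le_sq_sum_of_nonneg (fun i _ => flow_nonneg M p i)
  have hs2 : (∑ i, flow M p i)^2 ≤ (((lvl p : ℝ)+3) / cc (lvl p))^2 :=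
    pow_le_pow_left₀ (Finset.sum_nonneg fun i _ => flow_nonneg M p i) hsum 2
  have hfin : (((lvl p : ℝ)+3) / cc (lvl p))^2
      = 4 / (((lvl p : ℝ)+1)^2 * ((lvl p : ℝ)+2)^2) := by
    have he : ((lvl p : ℝ)+3) / cc (lvl p) = 2 / (((lvl p : ℝ)+1) * ((lvl p : ℝ)+2)) := by
      unfold cc
      field_simp
    rw [he, div_pow, mul_pow]
    norm_num
  calc ∑ i, (flow M p i)^2 ≤ (((lvl p : ℝ)+3) / cc (lvl p))^2 := le_trans hsq hs2
    _ = 4 / (((lvl p : ℝ)+1)^2 * ((lvl p : ℝ)+2)^2) := hfin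

lemma energy_le (hd : 3 ≤ d) (M : ℤ) (hM : 1 ≤ M) :
    ∑ p ∈ Oct d (M+1), ∑ i, (flow M p i)^2 ≤ 4 := by
  set S := Oct d (M+1) with hS
  have hmaps : ∀ p ∈ S, lvl p ∈ Finset.Icc (0:ℤ) (M+1) := by
    intro p hp
    rw [hS, mem_Oct] at hp
    rw [Finset.mem_Icc]
    exact ⟨lvl_nonneg hp.1, hp.2⟩
  rw [← Finset.sum_fiberwise_of_maps_to hmaps (fun p => ∑ i, (flow M p i)^2)]
  have hlevel : ∀ n ∈ Finset.Icc (0:ℤ) (M+1),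
      ∑ p ∈ S.filter (fun p => lvl p = n), ∑ i, (flow M p i)^2
        ≤ 4/((n:ℝ)+1) - 4/((n:ℝ)+2) := by
    intro n hn
    rw [Finset.mem_Icc] at hn
    have hn0 : 0 ≤ n := hn.1
    have hnr : (0:ℝ) ≤ (n:ℝ) := by exact_mod_cast hn0
    have hb1 : (0:ℝ) < (n:ℝ)+1 := by linarith
    have hb2 : (0:ℝ) < (n:ℝ)+2 := by linarith
    have hcard : ((S.filter (fun p => lvl p = n)).card : ℝ) ≤ ((n:ℝ)+1)^2 := by
      have hinj : Set.InjOn (fun p : Site d => (p ⟨0, by omega⟩, p ⟨1, by omega⟩))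
          ↑(S.filter (fun p => lvl p = n)) := by
        intro p hp q hq hpq
        rw [Finset.mem_coe, Finset.mem_filter, hS, mem_Oct] at hp hq
        obtain ⟨⟨hpo, _⟩, hpn⟩ := hp
        obtain ⟨⟨hqo, _⟩, hqn⟩ := hq
        have h0 := congrArg Prod.fst hpq
        have h1 := congrArg Prod.snd hpq
        simp only at h0 h1
        have hp3 := sum3_lvl hd hpo
        have hq3 := sum3_lvl hd hqo
        funext i
        by_cases c0 : (i:ℕ) = 0
        · rw [show i = (⟨0, by omega⟩ : Fin d) from Fin.ext c0]
          exact h0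
        by_cases c1 : (i:ℕ) = 1
        · rw [show i = (⟨1, by omega⟩ : Fin d) from Fin.ext c1]
          exact h1
        by_cases c2 : (i:ℕ) = 2
        · rw [show i = (⟨2, by omega⟩ : Fin d) from Fin.ext c2]
          omega
        · rw [hpo.2 i (by omega), hqo.2 i (by omega)]
      have hmapsto : ∀ p ∈ S.filter (fun p => lvl p = n),
          (fun p : Site d => (p ⟨0, by omega⟩, p ⟨1, by omega⟩)) p
            ∈ (Finset.Icc (0:ℤ) n) ×ˢ (Finset.Icc (0:ℤ) n) := by
        intro p hp
        rw [Finset.mem_filter, hS, mem_Oct] at hp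
        obtain ⟨⟨hpo, _⟩, hpn⟩ := hp
        rw [Finset.mem_product, Finset.mem_Icc, Finset.mem_Icc]
        exact ⟨⟨hpo.1 _, hpn ▸ coord_le_lvl hpo _⟩, ⟨hpo.1 _, hpn ▸ coord_le_lvl hpo _⟩⟩
      have hc := Finset.card_le_card_of_injOn _ hmapsto hinj
      rw [Finset.card_product, Int.card_Icc] at hc
      have htn : (((n + 1 - 0).toNat : ℤ) : ℝ) = (n:ℝ) + 1 := by
        rw [Int.toNat_of_nonneg (by omega)]
        push_cast
        ring
      calc ((S.filter (fun p => lvl p = n)).card : ℝ)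
          ≤ (((n + 1 - 0).toNat * (n + 1 - 0).toNat : ℕ) : ℝ) := by exact_mod_cast hc
        _ = ((n:ℝ)+1)^2 := by push_cast; rw [← htn]; push_cast; ring
    have hpt : ∀ p ∈ S.filter (fun p => lvl p = n),
        ∑ i, (flow M p i)^2 ≤ 4/(((n:ℝ)+1)^2*((n:ℝ)+2)^2) := by
      intro p hp
      rw [Finset.mem_filter, hS, mem_Oct] at hp
      obtain ⟨⟨hpo, _⟩, hpn⟩ := hp
      have := flow_sq_sum_le hd M hpo
      rw [hpn] at this
      exact this
    have hbnd : (0:ℝ) ≤ 4/(((n:ℝ)+1)^2*((n:ℝ)+2)^2) := by positivity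
    calc ∑ p ∈ S.filter (fun p => lvl p = n), ∑ i, (flow M p i)^2
        ≤ (S.filter (fun p => lvl p = n)).card • (4/(((n:ℝ)+1)^2*((n:ℝ)+2)^2)) :=
          Finset.sum_le_card_nsmul _ _ _ hpt
      _ = ((S.filter (fun p => lvl p = n)).card : ℝ) * (4/(((n:ℝ)+1)^2*((n:ℝ)+2)^2)) :=
          nsmul_eq_mul _ _
      _ ≤ ((n:ℝ)+1)^2 * (4/(((n:ℝ)+1)^2*((n:ℝ)+2)^2)) :=
          mul_le_mul_of_nonneg_right hcard hbnd
      _ = 4/((n:ℝ)+2)^2 := by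
          field_simp
      _ ≤ 4/((n:ℝ)+1) - 4/((n:ℝ)+2) := by
          rw [div_sub_div _ _ (ne_of_gt hb1) (ne_of_gt hb2)]
          have he : 4*((n:ℝ)+2) - ((n:ℝ)+1)*4 = 4 := by ring
          rw [he]
          apply div_le_div_of_nonneg_left (by norm_num) (mul_pos hb1 hb2)
          nlinarith
  calc ∑ n ∈ Finset.Icc (0:ℤ) (M+1), ∑ p ∈ S.filter (fun p => lvl p = n), ∑ i, (flow M p i)^2
      ≤ ∑ n ∈ Finset.Icc (0:ℤ) (M+1), (4/((n:ℝ)+1) - 4/((n:ℝ)+2)) :=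
        Finset.sum_le_sum hlevel
    _ ≤ 4 := by
        have hIcc : Finset.Icc (0:ℤ) (M+1)
            = (Finset.range ((M+1).toNat + 1)).image (fun j : ℕ => (j:ℤ)) := by
          ext a
          simp only [Finset.mem_Icc, Finset.mem_image, Finset.mem_range]
          constructor
          · intro ha
            exact ⟨a.toNat, by omega, by omega⟩
          · rintro ⟨j, hj, rfl⟩
            omega
        rw [hIcc, Finset.sum_image (fun a _ b _ h => by exact_mod_cast h)]
        set m := (M+1).toNat + 1 with hm
        have hcongr : ∑ j ∈ Finset.range m, (4/(((j:ℤ):ℝ)+1) - 4/(((j:ℤ):ℝ)+2))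
            = ∑ j ∈ Finset.range m,
              ((fun k : ℕ => -4/((k:ℝ)+1)) (j+1) - (fun k : ℕ => -4/((k:ℝ)+1)) j) := by
          apply Finset.sum_congr rfl
          intro j _
          push_cast
          ring
        rw [hcongr, Finset.sum_range_sub (fun k : ℕ => -4/((k:ℝ)+1))]
        have hpos : (0:ℝ) ≤ 4/((m:ℝ)+1) := by positivity
        have : -4/((m:ℝ)+1) = -(4/((m:ℝ)+1)) := by ring
        rw [this]
        norm_num
        linarith

open Matrix in
lemma sobolev (hd : 3 ≤ d) (V : Finset (Site d)) (h0 : (0:Site d) ∈ V)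
    (v : {x // x ∈ V} → ℝ) (hv1 : v ⟨0, h0⟩ = 1) :
    (1:ℝ) ≤ 4 * (v ⬝ᵥ (lapMatR V) *ᵥ v) := by
  set X := ext V v with hX
  have hX1 : X 0 = 1 := by
    rw [hX]
    have h : ext V v 0 = v ⟨0, h0⟩ := dif_pos h0
    rw [h, hv1]
  set M : ℤ := 1 + (V.sup fun p => (lvl p).toNat) with hMdef
  have hM1 : (1:ℤ) ≤ M := by
    have h := Int.natCast_nonneg (V.sup fun p => (lvl p).toNat)
    omega
  have hX0 : ∀ p : Site d, inOct p → M ≤ lvl p → X p = 0 := by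
    intro p _ hlvl
    rw [hX]
    apply ext_not_mem
    intro hpV
    have h1 : (lvl p).toNat ≤ V.sup (fun p => (lvl p).toNat) := Finset.le_sup (f := fun p => (lvl p).toNat) hpV
    have h2 : lvl p ≤ ((lvl p).toNat : ℤ) := Int.self_le_toNat _
    omega
  have hflow := flow_sum hd M hM1 X hX0
  set S := Oct d (M+1) with hS
  set W := S ∪ (V ∪ Finset.univ.biUnion (fun i : Fin d => V.image (fun p => p - E i))) with hW
  have hVW : V ⊆ W := fun p hp => Finset.mem_union_right _ (Finset.mem_union_left _ hp)
  have hWc : ∀ (i : Fin d) (q : Site d), q + E i ∈ V → q ∈ W := by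
    intro i q hq
    exact Finset.mem_union_right _ (Finset.mem_union_right _ (Finset.mem_biUnion.mpr
      ⟨i, Finset.mem_univ i, Finset.mem_image.mpr ⟨q + E i, hq, add_E_sub_E q i⟩⟩))
  have hQ : v ⬝ᵥ (lapMatR V) *ᵥ v = ∑ p ∈ W, ∑ i, (X p - X (p + E i))^2 :=
    quadform_eq V W v hVW hWc
  have hCS := Finset.sum_mul_sq_le_sq_mul_sq (S ×ˢ (Finset.univ : Finset (Fin d)))
      (fun z => flow M z.1 z.2) (fun z => X z.1 - X (z.1 + E z.2))
  rw [Finset.sum_product, Finset.sum_product, Finset.sum_product] at hCS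
  simp only at hCS
  rw [hflow, hX1] at hCS
  have hE := energy_le hd M hM1
  have hDir : ∑ p ∈ S, ∑ i, (X p - X (p + E i))^2 ≤ v ⬝ᵥ (lapMatR V) *ᵥ v := by
    rw [hQ]
    apply Finset.sum_le_sum_of_subset_of_nonneg Finset.subset_union_left
    intro p _ _
    exact Finset.sum_nonneg (fun i _ => sq_nonneg _)
  have hDir0 : (0:ℝ) ≤ ∑ p ∈ S, ∑ i, (X p - X (p + E i))^2 :=
    Finset.sum_nonneg fun p _ => Finset.sum_nonneg (fun i _ => sq_nonneg _)
  have hE0 : (0:ℝ) ≤ ∑ p ∈ S, ∑ i, (flow M p i)^2 :=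
    Finset.sum_nonneg fun p _ => Finset.sum_nonneg (fun i _ => sq_nonneg _)
  have h1 : (1:ℝ) ≤ (∑ p ∈ S, ∑ i, (flow M p i)^2)
      * (∑ p ∈ S, ∑ i, (X p - X (p + E i))^2) := by
    calc (1:ℝ) = 1^2 := by norm_num
      _ ≤ _ := hCS
  nlinarith [mul_le_mul_of_nonneg_right hE hDir0,
    mul_le_mul_of_nonneg_left hDir (show (0:ℝ) ≤ 4 by norm_num)]


end ASM2

open Matrix ASM ASM2 in
/-- for `d ≥ 3` there is a constant `C(d) > 0` such that for every finite
`V ⊂ ℤ^d` containing `0`, `det(Δ_{V∖{0}}) / det(Δ_V) ≤ C(d)` (equivalently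
`|R_{V∖{0}}| / |R_V| ≤ C(d)`), uniformly in `V`. -/
theorem det_ratio_uniformly_bounded {d : ℕ} (hd : 3 ≤ d) :
    ∃ C : ℝ, 0 < C ∧ ∀ V : Finset (Site d), (0 : Site d) ∈ V →
      0 < (lapMatR V).det ∧
      (lapMatR (V.erase 0)).det ≤ C * (lapMatR V).det := by
  refine ⟨4, by norm_num, ?_⟩
  intro V h0
  have hd1 : 1 ≤ d := by omega
  have hdetV : 0 < (lapMatR V).det := lapMatR_det_pos hd1 V
  refine ⟨hdetV, ?_⟩
  have hdetD : 0 < (lapMatR (V.erase 0)).det := lapMatR_det_pos hd1 _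
  have hmem : ∀ b : {x // x ∈ V.erase 0}, b.1 ∈ V := fun b => Finset.mem_of_mem_erase b.2
  have hne : ∀ b : {x // x ∈ V.erase 0}, b.1 ≠ 0 := fun b => (Finset.mem_erase.mp b.2).1
  set e : Unit ⊕ {x // x ∈ V.erase 0} ≃ {x // x ∈ V} :=
    { toFun := Sum.elim (fun _ => ⟨0, h0⟩) (fun b => ⟨b.1, hmem b⟩)
      invFun := fun a => if h : a.1 = 0 then Sum.inl () else
        Sum.inr ⟨a.1, Finset.mem_erase.mpr ⟨h, a.2⟩⟩
      left_inv := by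
        rintro (u | b)
        · simp
        · simp [hne b]
      right_inv := by
        intro a
        by_cases h : a.1 = 0
        · simp only [dif_pos h, Sum.elim_inl]
          exact Subtype.ext h.symm
        · simp only [dif_neg h, Sum.elim_inr] } with hedef
  set A : Matrix Unit Unit ℝ := fun _ _ => (2*(d:ℝ)) with hA
  set B : Matrix Unit {x // x ∈ V.erase 0} ℝ := fun _ b => ((lap d 0 b.1 : ℤ) : ℝ) with hB
  set C : Matrix {x // x ∈ V.erase 0} Unit ℝ := fun b _ => ((lap d b.1 0 : ℤ) : ℝ) with hC
  set D : Matrix {x // x ∈ V.erase 0} {x // x ∈ V.erase 0} ℝ := lapMatR (V.erase 0) with hD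
  have hblock : (lapMatR V).submatrix e e = Matrix.fromBlocks A B C D := by
    ext i j
    cases i with
    | inl i =>
      cases j with
      | inl j =>
        show ((lap d 0 0 : ℤ) : ℝ) = 2*(d:ℝ)
        rw [ASM.lap_self]
        push_cast
        ring
      | inr j => rfl
    | inr i =>
      cases j with
      | inl j => rfl
      | inr j => rfl
  have hdetsub : ((lapMatR V).submatrix e e).det = (lapMatR V).det :=
    Matrix.det_submatrix_equiv_self e (lapMatR V)
  have hDunit : IsUnit D.det := (ne_of_gt hdetD).isUnit
  haveI : Invertible D := D.invertibleOfIsUnitDet hDunit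
  have hdet2 : (Matrix.fromBlocks A B C D).det = D.det * (A - B * ⅟D * C).det :=
    Matrix.det_fromBlocks₂₂ A B C D
  set s : ℝ := (A - B * ⅟D * C) () () with hsdef
  have hdet1x1 : (A - B * ⅟D * C).det = s := Matrix.det_unique _
  set u : {x // x ∈ V.erase 0} → ℝ := fun b => C b () with hu
  set y : {x // x ∈ V.erase 0} → ℝ := -(⅟D *ᵥ u) with hy
  set x : Unit ⊕ {x // x ∈ V.erase 0} → ℝ := Sum.elim (fun _ => (1:ℝ)) y with hx
  have hDy : D *ᵥ y = -u := by
    rw [hy, Matrix.mulVec_neg, Matrix.mulVec_mulVec, mul_invOf_self, Matrix.one_mulVec]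
  have hCx : C *ᵥ (fun _ => (1:ℝ)) = u := by
    funext b
    show ∑ j : Unit, C b j * (1:ℝ) = u b
    simp [hu]
  have ht : x ⬝ᵥ ((Matrix.fromBlocks A B C D) *ᵥ x) = 2*(d:ℝ) + (B *ᵥ y) () := by
    rw [hx, Matrix.fromBlocks_mulVec, Sum.elim_comp_inl, Sum.elim_comp_inr,
      sumElim_dotProduct_sumElim, hCx, hDy,
      show u + -u = (0 : {x // x ∈ V.erase 0} → ℝ) from by funext b; simp,
      dotProduct_zero, add_zero]
    show ∑ j : Unit, (1:ℝ) * ((A *ᵥ fun _ => (1:ℝ)) j + (B *ᵥ y) j) = _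
    rw [Fintype.sum_unique]
    have hAv : (A *ᵥ fun _ => (1:ℝ)) () = 2*(d:ℝ) := by
      show ∑ j : Unit, A () j * (1:ℝ) = _
      rw [Fintype.sum_unique, hA]
      norm_num
    rw [hAv]
    ring
  have hs : s = 2*(d:ℝ) + (B *ᵥ y) () := by
    rw [hsdef, Matrix.sub_apply]
    have h2 : (B * ⅟D * C) () () = ((B * ⅟D) *ᵥ u) () := by
      rw [Matrix.mul_apply]
      apply Finset.sum_congr rfl
      intros
      rfl
    have h3 : ((B * ⅟D) *ᵥ u) () = -((B *ᵥ y) ()) := by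
      rw [← Matrix.mulVec_mulVec, hy, Matrix.mulVec_neg]
      simp
    rw [h2, h3]
    show 2*(d:ℝ) - -((B *ᵥ y) ()) = _
    ring
  have hdot : x ⬝ᵥ (((lapMatR V).submatrix e e) *ᵥ x)
      = (x ∘ e.symm) ⬝ᵥ ((lapMatR V) *ᵥ (x ∘ e.symm)) := by
    rw [Matrix.submatrix_mulVec_equiv]
    apply Fintype.sum_equiv e
    intro j
    simp [Function.comp]
  have hx'0 : (x ∘ e.symm) ⟨(0:Site d), h0⟩ = 1 := by
    have hsym : e.symm ⟨(0:Site d), h0⟩ = Sum.inl () := by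
      show (if h : (0:Site d) = 0 then Sum.inl () else _) = Sum.inl ()
      rw [dif_pos rfl]
    show x (e.symm ⟨(0:Site d), h0⟩) = 1
    rw [hsym, hx]
    rfl
  have hsob := sobolev hd V h0 (x ∘ e.symm) hx'0
  have hts : x ⬝ᵥ ((Matrix.fromBlocks A B C D) *ᵥ x)
      = (x ∘ e.symm) ⬝ᵥ ((lapMatR V) *ᵥ (x ∘ e.symm)) := by
    rw [← hblock]
    exact hdot
  have hQs : s = (x ∘ e.symm) ⬝ᵥ ((lapMatR V) *ᵥ (x ∘ e.symm)) := by
    rw [← hts, ht, hs]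
  have hs4 : (1:ℝ) ≤ 4 * s := by
    rw [hQs]
    exact hsob
  have hdetfactor : (lapMatR V).det = (lapMatR (V.erase 0)).det * s := by
    rw [← hdetsub, hblock, hdet2, hdet1x1, hD]
  rw [hdetfactor]
  nlinarith [mul_le_mul_of_nonneg_left hs4 (le_of_lt hdetD)]
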